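/- arXiv:2110.14724 — 2 statements merged into one kernel-verified Lean document; each statement's English description precedes it below -/
import Mathlib

section
/- In a finite concurrent reachability game ⟨C,⊤⟩, the value valuation equals the least fixed point m of the operator Δ (i.e. val(q) = m(q) for every state q), and moreover there exists a positional Player B strategy s_B such that for every state q and every Player A strategy s_A one has P^{s_A,s_B}_q(⊤) ≤ m(q), i.e. s_B is uniformly optimal for Player B. -/
open scoped BigOperators Classical

noncomputable section

/-- A probability distribution on a finite type. -/
def FDist (X : Type) [Fintype X] : Type :=
  { p : X → ℝ // (∀ x, 0 ≤ p x) ∧ ∑ x, p x = 1 }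

namespace CRG

variable {A B Q D : Type} [Fintype A] [Fintype B] [Fintype Q] [Fintype D]

/-- The support of a distribution. -/
def supp {X : Type} [Fintype X] (σ : FDist X) : Set X := { x | σ.1 x ≠ 0 }

/-- The Dirac distribution. -/
def dirac {X : Type} [Fintype X] [DecidableEq X] (x : X) : FDist X :=
  ⟨fun y => if y = x then 1 else 0, by
    constructor
    · intro y
      dsimp only
      split <;> norm_num
    · simp⟩

/-- Outcome of a pair of mixed strategies in the game in normal form with payoff `u`. -/
def out (u : A → B → ℝ) (σA : FDist A) (σB : FDist B) : ℝ :=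
  ∑ a, ∑ b, σA.1 a * σB.1 b * u a b

/-- Outcome of a mixed strategy of Player A against a pure action of Player B. -/
def outB (u : A → B → ℝ) (σA : FDist A) (b : B) : ℝ :=
  ∑ a, σA.1 a * u a b

/-- The value of a Player A mixed strategy in a game in normal form. -/
def valStratGF (u : A → B → ℝ) (σA : FDist A) : ℝ :=
  ⨅ σB : FDist B, out u σA σB

/-- The (von Neumann) value of a finite game in normal form. -/
def valGF (u : A → B → ℝ) : ℝ :=
  ⨆ σA : FDist A, valStratGF u σA

/-- The optimal Player A mixed strategies in a game in normal form. -/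
def OptA (u : A → B → ℝ) : Set (FDist A) := { σA | valStratGF u σA = valGF u }

/-- The optimal actions of Player B against the Player A mixed strategy `σA`. -/
def optActs (u : A → B → ℝ) (σA : FDist A) : Set B :=
  { b | outB u σA b = valStratGF u σA }

/-- μ_v : the lift of a valuation of the states to the Nature states. -/
def lift (dist : D → FDist Q) (v : Q → ℝ) (d : D) : ℝ := ∑ q, (dist d).1 q * v q

/-- The payoff function of the local interaction `F_q` valued by `μ_m`. -/
def locPay (δ : Q → A → B → D) (dist : D → FDist Q) (m : Q → ℝ) (q : Q) : A → B → ℝ :=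
  fun a b => lift dist m (δ q a b)

/-- One-step transition probability between states. -/
def step (δ : Q → A → B → D) (dist : D → FDist Q) (σA : FDist A) (σB : FDist B)
    (q q' : Q) : ℝ :=
  ∑ a, ∑ b, σA.1 a * σB.1 b * (dist (δ q a b)).1 q'

/-- The operator Δ on valuations of the states. -/
def Δop (δ : Q → A → B → D) (dist : D → FDist Q) (T : Q) (v : Q → ℝ) : Q → ℝ :=
  fun q => if q = T then 1 else valGF (fun a b => lift dist v (δ q a b))

/-- The target `T` is an absorbing (self-looping) sink. -/
def Absorbing (δ : Q → A → B → D) (dist : D → FDist Q) (T : Q) : Prop :=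
  ∀ a b, (dist (δ T a b)).1 = fun q => if q = T then 1 else 0

/-- `m` is the least fixed point of Δ on `[0,1]^Q`. -/
def IsLfpDelta (δ : Q → A → B → D) (dist : D → FDist Q) (T : Q) (m : Q → ℝ) : Prop :=
  (∀ q, m q ∈ Set.Icc (0:ℝ) 1) ∧ Δop δ dist T m = m ∧
    ∀ v : Q → ℝ, (∀ q, v q ∈ Set.Icc (0:ℝ) 1) → Δop δ dist T v = v → ∀ q, m q ≤ v q

/-- A strategy: a history of past states together with the current state gives a
mixed action.  (This encodes maps `Q⁺ → 𝒟(X)`.) -/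
def Strat (Q X : Type) [Fintype X] : Type := List Q → Q → FDist X

/-- Residual strategy after the history `π` has been played. -/
def residual {X : Type} [Fintype X] (s : Strat Q X) (π : List Q) : Strat Q X :=
  fun h q => s (π ++ h) q

/-- The (positional) strategy associated with a per-state choice of mixed actions. -/
def ofPos {X : Type} [Fintype X] (s : Q → FDist X) : Strat Q X := fun _ q => s q

/-- Probability of reaching the set `S` within `n` steps from current state `q`,
history `h` having been played. -/
def reachSetNAux (δ : Q → A → B → D) (dist : D → FDist Q) (S : Set Q) :
    ℕ → Strat Q A → Strat Q B → List Q → Q → ℝ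
  | 0, _, _, _, q => if q ∈ S then 1 else 0
  | n + 1, sA, sB, h, q =>
      if q ∈ S then 1
      else ∑ q', step δ dist (sA h q) (sB h q) q q' *
        reachSetNAux δ dist S n sA sB (h ++ [q]) q'

/-- Probability of reaching the set `S` within `n` steps from state `q`. -/
def reachSetN (δ : Q → A → B → D) (dist : D → FDist Q) (S : Set Q) (n : ℕ)
    (sA : Strat Q A) (sB : Strat Q B) (q : Q) : ℝ :=
  reachSetNAux δ dist S n sA sB [] q

/-- Probability of reaching the target `T` within `n` steps from state `q`. -/
def reachN (δ : Q → A → B → D) (dist : D → FDist Q) (T : Q) (n : ℕ)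
    (sA : Strat Q A) (sB : Strat Q B) (q : Q) : ℝ :=
  reachSetN δ dist {T} n sA sB q

/-- Probability of eventually reaching the target `T` from state `q`. -/
def reach (δ : Q → A → B → D) (dist : D → FDist Q) (T : Q)
    (sA : Strat Q A) (sB : Strat Q B) (q : Q) : ℝ :=
  ⨆ n : ℕ, reachN δ dist T n sA sB q

/-- The value of a Player A strategy from state `q`. -/
def valA (δ : Q → A → B → D) (dist : D → FDist Q) (T : Q) (sA : Strat Q A) (q : Q) : ℝ :=
  ⨅ sB : Strat Q B, reach δ dist T sA sB q

/-- The value of the game from state `q`. -/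
def value (δ : Q → A → B → D) (dist : D → FDist Q) (T : Q) (q : Q) : ℝ :=
  ⨆ sA : Strat Q A, valA δ dist T sA q

/-- A state is maximizable when Player A has an optimal strategy from it. -/
def Maximizable (δ : Q → A → B → D) (dist : D → FDist Q) (T q : Q) : Prop :=
  ∃ sA : Strat Q A, valA δ dist T sA q = value δ dist T q

/-- A positional Player A strategy locally dominates the valuation `v`. -/
def LocallyDominates (δ : Q → A → B → D) (dist : D → FDist Q)
    (sA : Q → FDist A) (v : Q → ℝ) : Prop :=
  ∀ q, v q ≤ valStratGF (fun a b => lift dist v (δ q a b)) (sA q)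

/-- Transition function ι of the MDP induced by a positional Player A strategy. -/
def stepB [DecidableEq B] (δ : Q → A → B → D) (dist : D → FDist Q)
    (sA : Q → FDist A) (q : Q) (b : B) (q' : Q) : ℝ :=
  step δ dist (sA q) (dirac b) q q'

/-- An end component of the MDP induced by the positional Player A strategy `sA`. -/
structure EndComp [DecidableEq B] (δ : Q → A → B → D) (dist : D → FDist Q)
    (sA : Q → FDist A) where
  states : Set Q
  acts : Q → Set B
  acts_nonempty : ∀ q ∈ states, (acts q).Nonempty
  closed : ∀ q ∈ states, ∀ b ∈ acts q, ∀ q', stepB δ dist sA q b q' ≠ 0 → q' ∈ states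
  connected : ∀ q ∈ states, ∀ q' ∈ states,
    Relation.ReflTransGen
      (fun x y => x ∈ states ∧ ∃ b ∈ acts x, stepB δ dist sA x b y ≠ 0) q q'

/-- `S_D` : the Nature states having a non-zero probability to reach `S`. -/
def natS (dist : D → FDist Q) (S : Set Q) : Set D :=
  { d | ∃ q ∈ S, (dist d).1 q ≠ 0 }

/-- Progressive optimal local strategies at `q` w.r.t. the set `Gd`. -/
def Prog (δ : Q → A → B → D) (dist : D → FDist Q) (m : Q → ℝ) (q : Q)
    (Gd : Set Q) : Set (FDist A) :=
  { σA | σA ∈ OptA (locPay δ dist m q) ∧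
      ∀ b ∈ optActs (locPay δ dist m q) σA, ∃ a ∈ supp σA, δ q a b ∈ natS dist Gd }

/-- Risky optimal local strategies at `q` w.r.t. the set `Bd`. -/
def Risk (δ : Q → A → B → D) (dist : D → FDist Q) (m : Q → ℝ) (q : Q)
    (Bd : Set Q) : Set (FDist A) :=
  { σA | σA ∈ OptA (locPay δ dist m q) ∧
      ∃ b ∈ optActs (locPay δ dist m q) σA, ∃ a ∈ supp σA, δ q a b ∈ natS dist Bd }

/-- Efficient local strategies: progressive and not risky. -/
def Eff (δ : Q → A → B → D) (dist : D → FDist Q) (m : Q → ℝ) (q : Q)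
    (Gd Bd : Set Q) : Set (FDist A) :=
  Prog δ dist m q Gd \ Risk δ dist m q Bd

/-- The increasing sequence of sets of secure states w.r.t. `Bd`. -/
def SecN (δ : Q → A → B → D) (dist : D → FDist Q) (m : Q → ℝ) (T : Q) (Bd : Set Q) :
    ℕ → Set Q
  | 0 => {T}
  | n + 1 => SecN δ dist m T Bd n ∪
      { q | q ∉ Bd ∧ (Eff δ dist m q (SecN δ dist m T Bd n) Bd).Nonempty }

/-- The set of secure states w.r.t. `Bd`. -/
def Sec (δ : Q → A → B → D) (dist : D → FDist Q) (m : Q → ℝ) (T : Q) (Bd : Set Q) :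
    Set Q :=
  (⋃ n : ℕ, SecN δ dist m T Bd n) ∪ { q | m q = 0 }

/-- The sequence of sets of bad states. -/
def BadN (δ : Q → A → B → D) (dist : D → FDist Q) (m : Q → ℝ) (T : Q) : ℕ → Set Q
  | 0 => ∅
  | n + 1 => (Sec δ dist m T (BadN δ dist m T n))ᶜ

/-- The set of bad states. -/
def Bad (δ : Q → A → B → D) (dist : D → FDist Q) (m : Q → ℝ) (T : Q) : Set Q :=
  BadN δ dist m T (Fintype.card Q)

/-- `α[y]` : the total valuation extending the partial valuation `α : O∖E → [0,1]`
with the value `y` on `E`. -/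
def extendVal {O : Type} (E : Set O) (α : O → ℝ) (y : ℝ) : O → ℝ :=
  fun o => if o ∈ E then y else α o

/-- The map `f_α : y ↦ val_{⟨F, α[y]⟩}`. -/
def fval {O : Type} (ρ : A → B → O) (E : Set O) (α : O → ℝ) (y : ℝ) : ℝ :=
  valGF (fun a b => extendVal E α y (ρ a b))

/-- `v` is the least fixed point of `f_α` on `[0,1]`. -/
def IsLfpVal {O : Type} (ρ : A → B → O) (E : Set O) (α : O → ℝ) (v : ℝ) : Prop :=
  v ∈ Set.Icc (0:ℝ) 1 ∧ fval ρ E α v = v ∧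
    ∀ y ∈ Set.Icc (0:ℝ) 1, fval ρ E α y = y → v ≤ y

/-- The game form `ρ` is reach-maximizable w.r.t. the partial valuation `α : O∖E → [0,1]`. -/
def RMwrt {O : Type} (ρ : A → B → O) (E : Set O) (α : O → ℝ) : Prop :=
  ∀ v : ℝ, IsLfpVal ρ E α v →
    v = 0 ∨
      ∃ σA ∈ OptA (fun a b => extendVal E α v (ρ a b)),
        ∀ b ∈ optActs (fun a b => extendVal E α v (ρ a b)) σA,
          ∃ a ∈ supp σA, ρ a b ∉ E

/-- A reach-maximizable game form: RM w.r.t. every partial valuation of its outcomes. -/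
def RMform {O : Type} (ρ : A → B → O) : Prop :=
  ∀ (E : Set O) (α : O → ℝ), (∀ o ∉ E, α o ∈ Set.Icc (0:ℝ) 1) → RMwrt ρ E α

/-- A determined game form. -/
def Determined {O : Type} (ρ : A → B → O) : Prop :=
  ∀ E : Set O, (∃ a, ∀ b, ρ a b ∈ E) ∨ (∃ b, ∀ a, ρ a b ∉ E)

/-- Transition function of the three-state reachability game `C_{(F,α)}`:
state `0` is `q₀`, state `1` is the target `⊤`, state `2` is the bin `⊥`. -/
def triδ {O : Type} (ρ : A → B → O) (E : Set O) :
    Fin 3 → A → B → (Fin 3 ⊕ {o : O // o ∉ E}) :=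
  fun s a b =>
    if s = 0 then
      if h : ρ a b ∈ E then Sum.inl 0 else Sum.inr ⟨ρ a b, h⟩
    else Sum.inl s

/-- Nature distributions of the three-state reachability game `C_{(F,α)}`. -/
def triDist {O : Type} (E : Set O) (α : O → ℝ)
    (hα : ∀ o ∉ E, α o ∈ Set.Icc (0:ℝ) 1) :
    (Fin 3 ⊕ {o : O // o ∉ E}) → FDist (Fin 3) := fun d =>
  match d with
  | Sum.inl t => dirac t
  | Sum.inr x =>
      ⟨![0, α x.1, 1 - α x.1], by
        obtain ⟨h0, h1⟩ := hα x.1 x.2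
        constructor
        · intro s
          fin_cases s <;> simp <;> linarith
        · simp [Fin.sum_univ_three]⟩

/-- An abstract (finite) game form with actions `A` and `B`. -/
structure GameForm (A B : Type) where
  O : Type
  fin : Fintype O
  ρ : A → B → O

/-- All local interactions of the arena `δ` belong to the set `𝒢` of game forms
(up to a renaming of the outcomes into Nature states). -/
def UsesForms {Q D : Type} (𝒢 : Set (GameForm A B)) (δ : Q → A → B → D) : Prop :=
  ∀ q, ∃ F ∈ 𝒢, ∃ g : F.O → D, δ q = fun a b => g (F.ρ a b)

/-- The sequence of iterates of Δ starting from the valuation `1_{⊤}`. -/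
def vseq (δ : Q → A → B → D) (dist : D → FDist Q) (T : Q) : ℕ → Q → ℝ
  | 0 => fun q => if q = T then 1 else 0
  | n + 1 => Δop δ dist T (vseq δ dist T n)

/-- Relevant paths w.r.t. the strategy `sA` from the state `q₀`: the pair `(h, q)`
encodes the path `h · q` (history `h`, current state `q`). -/
inductive Relevant [DecidableEq B] (δ : Q → A → B → D) (dist : D → FDist Q)
    (m : Q → ℝ) (sA : Strat Q A) (q₀ : Q) : List Q → Q → Prop
  | base : Relevant δ dist m sA q₀ [] q₀
  | step {h : List Q} {q q' : Q} :
      Relevant δ dist m sA q₀ h q →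
      (∃ b ∈ optActs (locPay δ dist m q) (sA h q),
        0 < CRG.step δ dist (sA h q) (dirac b) q q') →
      Relevant δ dist m sA q₀ (h ++ [q]) q'

end CRG
namespace MM
set_option linter.unusedSectionVars false

open CRG Finset

section Basic

variable {A B : Type} [Fintype A] [Fintype B] [Nonempty A] [Nonempty B]

instance instNonemptyFDist {X : Type} [Fintype X] [Nonempty X] : Nonempty (FDist X) :=
  ⟨CRG.dirac (Classical.arbitrary X)⟩

lemma FDist.mem_simplex {X : Type} [Fintype X] (σ : FDist X) : σ.1 ∈ stdSimplex ℝ X := σ.2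

variable (u : A → B → ℝ) (σA : FDist A) (σB : FDist B)

lemma out_eq_sum_outB : out u σA σB = ∑ b, σB.1 b * outB u σA b := by
  unfold out outB
  rw [Finset.sum_comm]
  refine Finset.sum_congr rfl fun b _ => ?_
  rw [Finset.mul_sum]
  exact Finset.sum_congr rfl fun a _ => by ring

lemma out_eq_sum_outA : out u σA σB = ∑ a, σA.1 a * ∑ b, σB.1 b * u a b := by
  unfold out
  refine Finset.sum_congr rfl fun a _ => ?_
  rw [Finset.mul_sum]
  exact Finset.sum_congr rfl fun b _ => by ring

lemma out_dirac_right (b : B) : out u σA (CRG.dirac b) = outB u σA b := by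
  rw [out_eq_sum_outB]
  unfold CRG.dirac
  simp [ite_mul, Finset.sum_ite_eq']

lemma outB_le {c : ℝ} (h : ∀ a b, u a b ≤ c) (b : B) : outB u σA b ≤ c := by
  unfold outB
  calc ∑ a, σA.1 a * u a b ≤ ∑ a, σA.1 a * c :=
        Finset.sum_le_sum fun a _ => mul_le_mul_of_nonneg_left (h a b) (σA.2.1 a)
    _ = c := by rw [← Finset.sum_mul, σA.2.2, one_mul]

lemma le_outB {c : ℝ} (h : ∀ a b, c ≤ u a b) (b : B) : c ≤ outB u σA b := by
  unfold outB
  calc c = ∑ a, σA.1 a * c := by rw [← Finset.sum_mul, σA.2.2, one_mul]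
    _ ≤ ∑ a, σA.1 a * u a b :=
        Finset.sum_le_sum fun a _ => mul_le_mul_of_nonneg_left (h a b) (σA.2.1 a)

lemma inf'_le_out :
    Finset.univ.inf' Finset.univ_nonempty (outB u σA) ≤ out u σA σB := by
  rw [out_eq_sum_outB]
  calc Finset.univ.inf' Finset.univ_nonempty (outB u σA)
      = ∑ b, σB.1 b * Finset.univ.inf' Finset.univ_nonempty (outB u σA) := by
        rw [← Finset.sum_mul, σB.2.2, one_mul]
    _ ≤ ∑ b, σB.1 b * outB u σA b :=
        Finset.sum_le_sum fun b _ =>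
          mul_le_mul_of_nonneg_left (Finset.inf'_le _ (Finset.mem_univ b)) (σB.2.1 b)

lemma bddBelow_out : BddBelow (Set.range fun σB : FDist B => out u σA σB) :=
  ⟨Finset.univ.inf' Finset.univ_nonempty (outB u σA), by
    rintro x ⟨σB, rfl⟩; exact inf'_le_out u σA σB⟩

lemma valStratGF_eq_inf' :
    valStratGF u σA = Finset.univ.inf' Finset.univ_nonempty (outB u σA) := by
  refine le_antisymm ?_ (le_ciInf fun σB => inf'_le_out u σA σB)
  obtain ⟨b, -, hb⟩ := Finset.exists_mem_eq_inf' (Finset.univ_nonempty (α := B)) (outB u σA)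
  rw [hb]
  exact (ciInf_le (bddBelow_out u σA) (CRG.dirac b)).trans (out_dirac_right u σA b).le

lemma valStratGF_le {c : ℝ} (h : ∀ a b, u a b ≤ c) : valStratGF u σA ≤ c := by
  rw [valStratGF_eq_inf']
  obtain ⟨b, -, hb⟩ := Finset.exists_mem_eq_inf' (Finset.univ_nonempty (α := B)) (outB u σA)
  rw [hb]; exact outB_le u σA h b

lemma le_valStratGF {c : ℝ} (h : ∀ a b, c ≤ u a b) : c ≤ valStratGF u σA := by
  rw [valStratGF_eq_inf']
  exact Finset.le_inf' _ _ fun b _ => le_outB u σA h b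

lemma exists_bounds : ∃ lo hi : ℝ, ∀ a b, lo ≤ u a b ∧ u a b ≤ hi := by
  refine ⟨Finset.univ.inf' Finset.univ_nonempty fun a =>
      Finset.univ.inf' Finset.univ_nonempty (u a),
    Finset.univ.sup' Finset.univ_nonempty fun a =>
      Finset.univ.sup' Finset.univ_nonempty (u a), fun a b => ⟨?_, ?_⟩⟩
  · exact (Finset.inf'_le _ (Finset.mem_univ a)).trans (Finset.inf'_le _ (Finset.mem_univ b))
  · exact (Finset.le_sup' (u a) (Finset.mem_univ b)).trans
      (Finset.le_sup' (fun a => Finset.univ.sup' Finset.univ_nonempty (u a)) (Finset.mem_univ a))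

lemma bddAbove_valStratGF : BddAbove (Set.range (valStratGF u)) := by
  obtain ⟨lo, hi, h⟩ := exists_bounds u
  exact ⟨hi, by rintro x ⟨σA, rfl⟩; exact valStratGF_le u σA fun a b => (h a b).2⟩

lemma valGF_le {c : ℝ} (h : ∀ a b, u a b ≤ c) : valGF u ≤ c :=
  ciSup_le fun σA => valStratGF_le u σA h

lemma le_valGF {c : ℝ} (h : ∀ a b, c ≤ u a b) : c ≤ valGF u := by
  have := le_valStratGF u (Classical.arbitrary (FDist A)) h
  exact this.trans (le_ciSup (bddAbove_valStratGF u) _)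

lemma valStratGF_le_add (u' : A → B → ℝ) {c : ℝ} (h : ∀ a b, u a b ≤ u' a b + c) :
    valStratGF u σA ≤ valStratGF u' σA + c := by
  rw [valStratGF_eq_inf', valStratGF_eq_inf']
  obtain ⟨b, -, hb⟩ := Finset.exists_mem_eq_inf' (Finset.univ_nonempty (α := B)) (outB u' σA)
  rw [hb]
  refine (Finset.inf'_le _ (Finset.mem_univ b)).trans ?_
  unfold outB
  have h1 : ∑ a, σA.1 a * u a b ≤ ∑ a, σA.1 a * (u' a b + c) :=
    Finset.sum_le_sum fun a _ => mul_le_mul_of_nonneg_left (h a b) (σA.2.1 a)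
  calc ∑ a, σA.1 a * u a b ≤ ∑ a, σA.1 a * (u' a b + c) := h1
    _ = (∑ a, σA.1 a * u' a b) + ∑ a, σA.1 a * c := by
        rw [← Finset.sum_add_distrib]; exact Finset.sum_congr rfl fun a _ => by ring
    _ = (∑ a, σA.1 a * u' a b) + c := by rw [← Finset.sum_mul, σA.2.2, one_mul]

lemma valGF_le_add (u' : A → B → ℝ) {c : ℝ} (h : ∀ a b, u a b ≤ u' a b + c) :
    valGF u ≤ valGF u' + c := by
  refine ciSup_le fun σA => (valStratGF_le_add u σA u' h).trans ?_
  exact add_le_add_left (le_ciSup (bddAbove_valStratGF u') σA) c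

lemma valGF_mono (u' : A → B → ℝ) (h : ∀ a b, u a b ≤ u' a b) : valGF u ≤ valGF u' := by
  have := valGF_le_add u u' (c := 0) (fun a b => by simpa using h a b)
  simpa using this

end Basic

end MM
namespace MM

section Minimax

open CRG Finset

variable {A B : Type} [Fintype A] [Fintype B] [Nonempty A] [Nonempty B]

lemma simplex_nonempty {X : Type} [Fintype X] [Nonempty X] :
    (stdSimplex ℝ X).Nonempty :=
  ⟨(CRG.dirac (Classical.arbitrary X)).1, (CRG.dirac (Classical.arbitrary X)).2⟩

lemma attain_A (u : A → B → ℝ) :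
    ∃ σA : FDist A, ∀ σB : FDist B, valGF u ≤ out u σA σB := by
  set φ : (A → ℝ) → ℝ := fun p => Finset.univ.inf' Finset.univ_nonempty
      (fun b => ∑ a, p a * u a b) with hφ
  have hcont : Continuous φ := by
    refine Continuous.finset_inf'_apply Finset.univ_nonempty fun b _ => ?_
    exact continuous_finset_sum _ fun a _ => (continuous_apply a).mul continuous_const
  obtain ⟨p, hp, hmax⟩ :=
    (isCompact_stdSimplex ℝ A).exists_isMaxOn simplex_nonempty hcont.continuousOn
  have h1 : ∀ σA : FDist A, valStratGF u σA = φ σA.1 := fun σA =>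
    valStratGF_eq_inf' u σA
  have hval : valGF u = φ p := by
    refine le_antisymm (ciSup_le fun σA => ?_) ?_
    · rw [h1]; exact hmax σA.2
    · rw [← h1 ⟨p, hp⟩]; exact le_ciSup (bddAbove_valStratGF u) _
  refine ⟨⟨p, hp⟩, fun σB => ?_⟩
  rw [hval]
  have h2 : φ p = valStratGF u ⟨p, hp⟩ := (h1 ⟨p, hp⟩).symm
  rw [h2]
  exact (valStratGF_eq_inf' u _).le.trans (inf'_le_out u ⟨p, hp⟩ σB)

lemma exists_rowbound (u : A → B → ℝ) {lam : ℝ} (hlam : valGF u < lam) :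
    ∃ σB : FDist B, ∀ a, (∑ b, σB.1 b * u a b) ≤ lam := by
  by_contra hcon
  push_neg at hcon
  set L : (B → ℝ) → (A → ℝ) := fun p a => ∑ b, p b * u a b with hL
  have hLcont : Continuous L := continuous_pi fun a =>
    continuous_finset_sum _ fun b _ => (continuous_apply b).mul continuous_const
  have hLlin : IsLinearMap ℝ L := by
    constructor
    · intro p q; funext a
      simp only [hL, Pi.add_apply, add_mul, Finset.sum_add_distrib]
    · intro c p; funext a
      simp only [hL, Pi.smul_apply, smul_eq_mul, Finset.mul_sum, mul_assoc]
  set K : Set (A → ℝ) := L '' stdSimplex ℝ B with hK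
  set N : Set (A → ℝ) := {z | ∀ a, z a ≤ lam} with hN
  have hKconv : Convex ℝ K := (convex_stdSimplex ℝ B).is_linear_image hLlin
  have hKcomp : IsCompact K := (isCompact_stdSimplex ℝ B).image hLcont
  have hNeq : N = Set.pi Set.univ (fun _ : A => Set.Iic lam) := by
    ext z; simp only [hN, Set.mem_setOf_eq, Set.mem_pi, Set.mem_univ, forall_true_left,
      Set.mem_Iic, true_implies]
  have hNconv : Convex ℝ N := by
    rw [hNeq]; exact convex_pi fun a _ => convex_Iic lam
  have hNclosed : IsClosed N := by
    rw [hNeq]; exact isClosed_set_pi fun a _ => isClosed_Iic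
  have hdisj : Disjoint N K := by
    rw [Set.disjoint_left]
    rintro z hzN ⟨p, hp, rfl⟩
    obtain ⟨a, ha⟩ := hcon ⟨p, hp⟩
    exact absurd (hzN a) (not_le.2 ha)
  obtain ⟨f, c1, c2, hfN, hc, hfK⟩ :=
    geometric_hahn_banach_closed_compact hNconv hNclosed hKconv hKcomp hdisj
  set x : A → ℝ := fun a => f (fun j => if a = j then 1 else 0) with hx
  have hfx : ∀ z : A → ℝ, f z = ∑ a, z a * x a := by
    intro z
    conv_lhs => rw [pi_eq_sum_univ z]
    rw [map_sum]
    exact Finset.sum_congr rfl fun a _ => by rw [map_smul, smul_eq_mul]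
  have hconst : (fun _ : A => lam) ∈ N := fun a => le_refl _
  have hfc : f (fun _ : A => lam) < c1 := hfN _ hconst
  have hxnn : ∀ a, 0 ≤ x a := by
    intro a; by_contra hneg
    push_neg at hneg
    set t : ℝ := (c1 + 1 - f (fun _ : A => lam)) / (-(x a)) with ht
    have ht0 : 0 ≤ t := div_nonneg (by linarith) (by linarith)
    have hz : ((fun _ : A => lam) - t • (fun j => if a = j then (1:ℝ) else 0)) ∈ N := by
      intro a'
      simp only [Pi.sub_apply, Pi.smul_apply, smul_eq_mul]
      rcases eq_or_ne a a' with rfl | h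
      · rw [if_pos rfl, mul_one]; linarith
      · rw [if_neg h, mul_zero]; linarith
    have hlt := hfN _ hz
    rw [map_sub, map_smul, smul_eq_mul] at hlt
    have hxa : -(x a) ≠ 0 := by linarith
    have hcancel : t * (-(x a)) = c1 + 1 - f (fun _ : A => lam) :=
      div_mul_cancel₀ _ hxa
    have : t * x a = -(c1 + 1 - f (fun _ : A => lam)) := by
      have : t * x a = -(t * (-(x a))) := by ring
      rw [this, hcancel]
    have hrw : f (fun j => if a = j then (1:ℝ) else 0) = x a := rfl
    rw [hrw] at hlt
    linarith [hlt, this]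
  have hcol : ∀ b : B, (fun a => u a b) ∈ K := by
    intro b
    refine ⟨(CRG.dirac b).1, (CRG.dirac b).2, ?_⟩
    funext a
    simp only [hL, CRG.dirac, ite_mul, one_mul, zero_mul]
    rw [Finset.sum_ite_eq' Finset.univ b (fun b' => u a b')]
    simp
  have hfcol : ∀ b : B, c2 < ∑ a, u a b * x a := by
    intro b
    have := hfK _ (hcol b)
    rwa [hfx] at this
  have hfceq : f (fun _ : A => lam) = lam * ∑ a, x a := by
    rw [hfx]; rw [Finset.mul_sum]
  have hS : 0 < ∑ a, x a := by
    rcases lt_or_eq_of_le (Finset.sum_nonneg fun a _ => hxnn a) with h | h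
    · exact h
    · exfalso
      have hzero : ∀ a, x a = 0 := by
        intro a
        have := (Finset.sum_eq_zero_iff_of_nonneg (fun a _ => hxnn a)).1 h.symm
        exact this a (Finset.mem_univ a)
      have h1 := hfcol (Classical.arbitrary B)
      have h2 : (∑ a, u a (Classical.arbitrary B) * x a) = 0 :=
        Finset.sum_eq_zero fun a _ => by rw [hzero a, mul_zero]
      rw [h2] at h1
      rw [hfceq] at hfc
      have h3 : (∑ a, x a) = 0 := h.symm
      rw [h3, mul_zero] at hfc
      linarith
  set σA : FDist A := ⟨fun a => x a / (∑ a', x a'), by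
    constructor
    · intro a; exact div_nonneg (hxnn a) hS.le
    · rw [← Finset.sum_div, div_self hS.ne']⟩ with hσA
  have hout : ∀ b, lam < outB u σA b := by
    intro b
    have h1 : lam * ∑ a, x a < ∑ a, u a b * x a := by
      have := hfcol b
      rw [hfceq] at hfc
      linarith
    have h2 : outB u σA b = (∑ a, u a b * x a) / (∑ a', x a') := by
      unfold CRG.outB
      rw [Finset.sum_div]
      exact Finset.sum_congr rfl fun a _ => by
        simp only [hσA]
        ring
    rw [h2, lt_div_iff₀ hS]
    linarith
  have : lam ≤ valGF u := by
    have h1 : lam ≤ valStratGF u σA := by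
      rw [valStratGF_eq_inf']
      exact Finset.le_inf' _ _ fun b _ => (hout b).le
    exact h1.trans (le_ciSup (bddAbove_valStratGF u) _)
  linarith

lemma minimax_B (u : A → B → ℝ) :
    ∃ σB : FDist B, ∀ σA : FDist A, out u σA σB ≤ valGF u := by
  set g : (B → ℝ) → ℝ := fun p => Finset.univ.sup' Finset.univ_nonempty
      (fun a => ∑ b, p b * u a b) with hg
  have hcont : Continuous g := by
    refine Continuous.finset_sup'_apply Finset.univ_nonempty fun a _ => ?_
    exact continuous_finset_sum _ fun b _ => (continuous_apply b).mul continuous_const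
  obtain ⟨p, hp, hmin⟩ :=
    (isCompact_stdSimplex ℝ B).exists_isMinOn simplex_nonempty hcont.continuousOn
  have hgp : g p ≤ valGF u := by
    refine le_of_forall_pos_le_add fun ε hε => ?_
    obtain ⟨σB, hσB⟩ := exists_rowbound u (lt_add_of_pos_right (valGF u) hε)
    refine (hmin σB.2).trans ?_
    exact Finset.sup'_le _ _ fun a _ => hσB a
  refine ⟨⟨p, hp⟩, fun σA => ?_⟩
  refine (out_eq_sum_outA u σA _).le.trans ?_
  calc ∑ a, σA.1 a * ∑ b, p b * u a b
      ≤ ∑ a, σA.1 a * g p := Finset.sum_le_sum fun a _ =>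
        mul_le_mul_of_nonneg_left
          (Finset.le_sup' (fun a => ∑ b, p b * u a b) (Finset.mem_univ a)) (σA.2.1 a)
    _ = g p := by rw [← Finset.sum_mul, σA.2.2, one_mul]
    _ ≤ valGF u := hgp

end Minimax

end MM
namespace MM
set_option linter.unusedSectionVars false

section Game

open CRG Finset

variable {A B Q D : Type} [Fintype A] [Fintype B] [Fintype Q] [Fintype D]
  [Nonempty A] [Nonempty B] [Nonempty Q] [Nonempty D]

instance instNonemptyStrat {X : Type} [Fintype X] [Nonempty X] :
    Nonempty (CRG.Strat Q X) := ⟨fun _ _ => Classical.arbitrary _⟩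

variable (δ : Q → A → B → D) (dist : D → FDist Q) (T : Q)

lemma step_nonneg (σA : FDist A) (σB : FDist B) (q q' : Q) :
    0 ≤ CRG.step δ dist σA σB q q' :=
  Finset.sum_nonneg fun a _ => Finset.sum_nonneg fun b _ =>
    mul_nonneg (mul_nonneg (σA.2.1 a) (σB.2.1 b)) ((dist (δ q a b)).2.1 q')

lemma step_dot (σA : FDist A) (σB : FDist B) (q : Q) (v : Q → ℝ) :
    ∑ q', CRG.step δ dist σA σB q q' * v q' =
      out (fun a b => lift dist v (δ q a b)) σA σB := by
  unfold CRG.step CRG.out CRG.lift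
  calc ∑ q', (∑ a, ∑ b, σA.1 a * σB.1 b * (dist (δ q a b)).1 q') * v q'
      = ∑ q', ∑ a, ∑ b, σA.1 a * σB.1 b * ((dist (δ q a b)).1 q' * v q') := by
        refine Finset.sum_congr rfl fun q' _ => ?_
        rw [Finset.sum_mul]
        refine Finset.sum_congr rfl fun a _ => ?_
        rw [Finset.sum_mul]
        exact Finset.sum_congr rfl fun b _ => by ring
    _ = ∑ a, ∑ q', ∑ b, σA.1 a * σB.1 b * ((dist (δ q a b)).1 q' * v q') := Finset.sum_comm
    _ = ∑ a, ∑ b, ∑ q', σA.1 a * σB.1 b * ((dist (δ q a b)).1 q' * v q') :=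
        Finset.sum_congr rfl fun a _ => Finset.sum_comm
    _ = ∑ a, ∑ b, σA.1 a * σB.1 b * ∑ q', (dist (δ q a b)).1 q' * v q' := by
        refine Finset.sum_congr rfl fun a _ => Finset.sum_congr rfl fun b _ => ?_
        rw [Finset.mul_sum]

lemma out_const (σA : FDist A) (σB : FDist B) (c : ℝ) :
    out (fun _ _ => c) σA σB = c := by
  rw [out_eq_sum_outA]
  have : ∀ a : A, (∑ b, σB.1 b * c) = c := fun a => by
    rw [← Finset.sum_mul, σB.2.2, one_mul]
  calc ∑ a, σA.1 a * ∑ b, σB.1 b * c = ∑ a, σA.1 a * c := by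
        refine Finset.sum_congr rfl fun a _ => by rw [this a]
    _ = c := by rw [← Finset.sum_mul, σA.2.2, one_mul]

lemma step_sum_one (σA : FDist A) (σB : FDist B) (q : Q) :
    ∑ q', CRG.step δ dist σA σB q q' = 1 := by
  have h := step_dot δ dist σA σB q (fun _ => 1)
  simp only [mul_one] at h
  rw [h]
  have : (fun a b => lift dist (fun _ => (1:ℝ)) (δ q a b)) = fun _ _ => (1:ℝ) := by
    funext a b
    unfold CRG.lift
    simp only [mul_one]
    exact (dist (δ q a b)).2.2
  rw [this, out_const]

lemma lift_le_add (v w : Q → ℝ) {c : ℝ} (h : ∀ q, v q ≤ w q + c) (d : D) :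
    lift dist v d ≤ lift dist w d + c := by
  unfold CRG.lift
  calc ∑ q, (dist d).1 q * v q ≤ ∑ q, (dist d).1 q * (w q + c) :=
        Finset.sum_le_sum fun q _ => mul_le_mul_of_nonneg_left (h q) ((dist d).2.1 q)
    _ = (∑ q, (dist d).1 q * w q) + ∑ q, (dist d).1 q * c := by
        rw [← Finset.sum_add_distrib]
        exact Finset.sum_congr rfl fun q _ => by ring
    _ = (∑ q, (dist d).1 q * w q) + c := by rw [← Finset.sum_mul, (dist d).2.2, one_mul]

lemma lift_mono (v w : Q → ℝ) (h : ∀ q, v q ≤ w q) (d : D) :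
    lift dist v d ≤ lift dist w d := by
  have := lift_le_add dist v w (c := 0) (fun q => by simpa using h q) d
  simpa using this

lemma lift_nonneg (v : Q → ℝ) (hv : ∀ q, 0 ≤ v q) (d : D) : 0 ≤ lift dist v d :=
  Finset.sum_nonneg fun q _ => mul_nonneg ((dist d).2.1 q) (hv q)

lemma lift_le_one (v : Q → ℝ) (hv : ∀ q, v q ≤ 1) (d : D) : lift dist v d ≤ 1 := by
  have h1 : lift dist v d ≤ lift dist (fun _ => 1) d := lift_mono dist v _ hv d
  have h2 : lift dist (fun _ => (1:ℝ)) d = 1 := by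
    unfold CRG.lift; simp only [mul_one]; exact (dist d).2.2
  linarith

lemma reachSetNAux_mem_Icc (S : Set Q) :
    ∀ (n : ℕ) (sA : CRG.Strat Q A) (sB : CRG.Strat Q B) (h : List Q) (q : Q),
      reachSetNAux δ dist S n sA sB h q ∈ Set.Icc (0:ℝ) 1 := by
  intro n
  induction n with
  | zero =>
    intro sA sB h q
    simp only [CRG.reachSetNAux]
    split_ifs <;> norm_num
  | succ n ih =>
    intro sA sB h q
    simp only [CRG.reachSetNAux]
    split_ifs with hq
    · norm_num
    · constructor
      · exact Finset.sum_nonneg fun q' _ => mul_nonneg (step_nonneg δ dist _ _ q q')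
          (ih sA sB (h ++ [q]) q').1
      · calc ∑ q', CRG.step δ dist (sA h q) (sB h q) q q' *
              reachSetNAux δ dist S n sA sB (h ++ [q]) q'
            ≤ ∑ q', CRG.step δ dist (sA h q) (sB h q) q q' * 1 :=
              Finset.sum_le_sum fun q' _ => mul_le_mul_of_nonneg_left
                (ih sA sB (h ++ [q]) q').2 (step_nonneg δ dist _ _ q q')
          _ = 1 := by simp only [mul_one]; exact step_sum_one δ dist _ _ q

lemma reachN_mem_Icc (n : ℕ) (sA : CRG.Strat Q A) (sB : CRG.Strat Q B) (q : Q) :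
    reachN δ dist T n sA sB q ∈ Set.Icc (0:ℝ) 1 :=
  reachSetNAux_mem_Icc δ dist {T} n sA sB [] q

lemma bddAbove_reachN (sA : CRG.Strat Q A) (sB : CRG.Strat Q B) (q : Q) :
    BddAbove (Set.range fun n => reachN δ dist T n sA sB q) :=
  ⟨1, by rintro x ⟨n, rfl⟩; exact (reachN_mem_Icc δ dist T n sA sB q).2⟩

lemma reach_nonneg (sA : CRG.Strat Q A) (sB : CRG.Strat Q B) (q : Q) :
    0 ≤ reach δ dist T sA sB q :=
  le_trans (reachN_mem_Icc δ dist T 0 sA sB q).1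
    (le_ciSup (bddAbove_reachN δ dist T sA sB q) 0)

lemma reach_le_one (sA : CRG.Strat Q A) (sB : CRG.Strat Q B) (q : Q) :
    reach δ dist T sA sB q ≤ 1 :=
  ciSup_le fun n => (reachN_mem_Icc δ dist T n sA sB q).2

lemma bddBelow_reach (sA : CRG.Strat Q A) (q : Q) :
    BddBelow (Set.range fun sB : CRG.Strat Q B => reach δ dist T sA sB q) :=
  ⟨0, by rintro x ⟨sB, rfl⟩; exact reach_nonneg δ dist T sA sB q⟩

lemma valA_le_one (sA : CRG.Strat Q A) (q : Q) : valA δ dist T sA q ≤ 1 :=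
  ciInf_le_of_le (bddBelow_reach δ dist T sA q) (Classical.arbitrary _)
    (reach_le_one δ dist T sA _ q)

lemma bddAbove_valA (q : Q) :
    BddAbove (Set.range fun sA : CRG.Strat Q A => valA δ dist T sA q) :=
  ⟨1, by rintro x ⟨sA, rfl⟩; exact valA_le_one δ dist T sA q⟩

/-- B-side induction. -/
lemma Bside (m : Q → ℝ) (hmT : m T = 1) (hm0 : ∀ q, 0 ≤ m q) (σB : Q → FDist B)
    (hσB : ∀ q, q ≠ T → ∀ σA : FDist A, out (locPay δ dist m q) σA (σB q) ≤ m q) :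
    ∀ (n : ℕ) (sA : CRG.Strat Q A) (h : List Q) (q : Q),
      reachSetNAux δ dist {T} n sA (ofPos σB) h q ≤ m q := by
  intro n
  induction n with
  | zero =>
    intro sA h q
    simp only [CRG.reachSetNAux]
    split_ifs with hq
    · rw [Set.mem_singleton_iff] at hq
      rw [hq, hmT]
    · exact hm0 q
  | succ n ih =>
    intro sA h q
    simp only [CRG.reachSetNAux]
    split_ifs with hq
    · rw [Set.mem_singleton_iff] at hq
      rw [hq, hmT]
    · have hqT : q ≠ T := by simpa using hq
      calc ∑ q', CRG.step δ dist (sA h q) (ofPos σB h q) q q' *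
            reachSetNAux δ dist {T} n sA (ofPos σB) (h ++ [q]) q'
          ≤ ∑ q', CRG.step δ dist (sA h q) (ofPos σB h q) q q' * m q' :=
            Finset.sum_le_sum fun q' _ => mul_le_mul_of_nonneg_left
              (ih sA (h ++ [q]) q') (step_nonneg δ dist _ _ q q')
        _ = out (fun a b => lift dist m (δ q a b)) (sA h q) (σB q) :=
            step_dot δ dist (sA h q) (σB q) q m
        _ ≤ m q := hσB q hqT (sA h q)

/-! ### The sequence of iterates -/

lemma Δop_le_add (v w : Q → ℝ) {c : ℝ} (hc : 0 ≤ c) (h : ∀ q, v q ≤ w q + c) (q : Q) :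
    Δop δ dist T v q ≤ Δop δ dist T w q + c := by
  unfold CRG.Δop
  split_ifs with hq
  · linarith
  · exact valGF_le_add _ _ fun a b => lift_le_add dist v w h (δ q a b)

lemma Δop_mono (v w : Q → ℝ) (h : ∀ q, v q ≤ w q) (q : Q) :
    Δop δ dist T v q ≤ Δop δ dist T w q := by
  have := Δop_le_add δ dist T v w (c := 0) le_rfl (fun q => by simpa using h q) q
  simpa using this

lemma vseq_mem_Icc : ∀ (n : ℕ) (q : Q), vseq δ dist T n q ∈ Set.Icc (0:ℝ) 1 := by
  intro n
  induction n with
  | zero =>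
    intro q
    simp only [CRG.vseq]
    split_ifs <;> norm_num
  | succ n ih =>
    intro q
    simp only [CRG.vseq, CRG.Δop]
    split_ifs with hq
    · norm_num
    · constructor
      · exact le_valGF _ fun a b => lift_nonneg dist _ (fun q' => (ih q').1) _
      · exact valGF_le _ fun a b => lift_le_one dist _ (fun q' => (ih q').2) _

lemma vseq_succ_le (n : ℕ) (q : Q) : vseq δ dist T n q ≤ vseq δ dist T (n + 1) q := by
  induction n generalizing q with
  | zero =>
    simp only [CRG.vseq, CRG.Δop]
    split_ifs with hq
    · exact le_refl 1
    · exact le_valGF _ fun a b => lift_nonneg dist _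
        (fun q' => (vseq_mem_Icc δ dist T 0 q').1) _
  | succ n ih =>
    show Δop δ dist T (vseq δ dist T n) q ≤ Δop δ dist T (vseq δ dist T (n + 1)) q
    exact Δop_mono δ dist T _ _ ih q

lemma vseq_mono {n k : ℕ} (h : n ≤ k) (q : Q) : vseq δ dist T n q ≤ vseq δ dist T k q :=
  monotone_nat_of_le_succ (fun n => vseq_succ_le δ dist T n q) h

/-- The limit valuation. -/
def vstar (q : Q) : ℝ := ⨆ n : ℕ, vseq δ dist T n q

lemma bddAbove_vseq (q : Q) : BddAbove (Set.range fun n => vseq δ dist T n q) :=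
  ⟨1, by rintro x ⟨n, rfl⟩; exact (vseq_mem_Icc δ dist T n q).2⟩

lemma vseq_le_vstar (n : ℕ) (q : Q) : vseq δ dist T n q ≤ vstar δ dist T q :=
  le_ciSup (bddAbove_vseq δ dist T q) n

lemma vstar_mem_Icc (q : Q) : vstar δ dist T q ∈ Set.Icc (0:ℝ) 1 := by
  constructor
  · exact le_trans (vseq_mem_Icc δ dist T 0 q).1 (vseq_le_vstar δ dist T 0 q)
  · exact ciSup_le fun n => (vseq_mem_Icc δ dist T n q).2

lemma vstar_fixed : Δop δ dist T (vstar δ dist T) = vstar δ dist T := by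
  funext q
  refine le_antisymm ?_ ?_
  · refine le_of_forall_pos_le_add fun ε hε => ?_
    have hex : ∀ q' : Q, ∃ n, vstar δ dist T q' - ε < vseq δ dist T n q' := by
      intro q'
      have : vstar δ dist T q' - ε < vstar δ dist T q' := by linarith
      exact exists_lt_of_lt_ciSup this
    choose nf hnf using hex
    set N : ℕ := Finset.univ.sup nf with hN
    have hclose : ∀ q', vstar δ dist T q' ≤ vseq δ dist T N q' + ε := by
      intro q'
      have h1 := hnf q'
      have h2 : vseq δ dist T (nf q') q' ≤ vseq δ dist T N q' :=
        vseq_mono δ dist T (Finset.le_sup (Finset.mem_univ q')) q'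
      linarith
    have h3 : Δop δ dist T (vstar δ dist T) q ≤ Δop δ dist T (vseq δ dist T N) q + ε :=
      Δop_le_add δ dist T _ _ hε.le hclose q
    have h4 : Δop δ dist T (vseq δ dist T N) q = vseq δ dist T (N + 1) q := rfl
    have h5 := vseq_le_vstar δ dist T (N + 1) q
    linarith
  · refine ciSup_le fun n => ?_
    have h1 := vseq_succ_le δ dist T n q
    have h2 : vseq δ dist T (n + 1) q = Δop δ dist T (vseq δ dist T n) q := rfl
    have h3 : Δop δ dist T (vseq δ dist T n) q ≤ Δop δ dist T (vstar δ dist T) q :=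
      Δop_mono δ dist T _ _ (fun q' => vseq_le_vstar δ dist T n q') q
    linarith

/-! ### Player A side -/

/-- An optimal Player A mixed strategy in the normal-form game `u`. -/
def optActA (u : A → B → ℝ) : FDist A := Classical.choose (attain_A u)

lemma optActA_spec (u : A → B → ℝ) (σB : FDist B) : valGF u ≤ out u (optActA u) σB :=
  Classical.choose_spec (attain_A u) σB

/-- The Player A strategy optimal for the `n`-step game. -/
def sAn (n : ℕ) : CRG.Strat Q A :=
  fun h q => optActA (locPay δ dist (vseq δ dist T (n - 1 - h.length)) q)

lemma Aside (n : ℕ) :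
    ∀ (j : ℕ) (h : List Q) (q : Q), h.length + j = n → ∀ sB : CRG.Strat Q B,
      vseq δ dist T j q ≤ reachSetNAux δ dist {T} j (sAn δ dist T n) sB h q := by
  intro j
  induction j with
  | zero =>
    intro h q hlen sB
    simp only [CRG.vseq, CRG.reachSetNAux, Set.mem_singleton_iff]
    split_ifs <;> norm_num
  | succ j ih =>
    intro h q hlen sB
    simp only [CRG.reachSetNAux]
    split_ifs with hq
    · rw [Set.mem_singleton_iff] at hq
      have h1 : vseq δ dist T (j + 1) q = 1 := by
        show Δop δ dist T (vseq δ dist T j) q = 1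
        unfold CRG.Δop
        rw [if_pos hq]
      rw [h1]
    · have hqT : q ≠ T := by simpa using hq
      have hlen2 : n - 1 - h.length = j := by omega
      have hsA : sAn δ dist T n h q =
          optActA (locPay δ dist (vseq δ dist T j) q) := by
        unfold sAn
        rw [hlen2]
      rw [hsA]
      have hval : vseq δ dist T (j + 1) q =
          valGF (fun a b => lift dist (vseq δ dist T j) (δ q a b)) := by
        show Δop δ dist T (vseq δ dist T j) q = _
        unfold CRG.Δop
        rw [if_neg hqT]
      rw [hval]
      calc valGF (fun a b => lift dist (vseq δ dist T j) (δ q a b))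
          ≤ out (fun a b => lift dist (vseq δ dist T j) (δ q a b))
              (optActA (locPay δ dist (vseq δ dist T j) q)) (sB h q) :=
            optActA_spec _ (sB h q)
        _ = ∑ q', CRG.step δ dist (optActA (locPay δ dist (vseq δ dist T j) q)) (sB h q) q q' *
              vseq δ dist T j q' :=
            (step_dot δ dist _ (sB h q) q (vseq δ dist T j)).symm
        _ ≤ ∑ q', CRG.step δ dist (optActA (locPay δ dist (vseq δ dist T j) q)) (sB h q) q q' *
              reachSetNAux δ dist {T} j (sAn δ dist T n) sB (h ++ [q]) q' := by
            refine Finset.sum_le_sum fun q' _ => mul_le_mul_of_nonneg_left ?_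
              (step_nonneg δ dist _ _ q q')
            refine ih (h ++ [q]) q' ?_ sB
            simp only [List.length_append, List.length_singleton]
            omega

end Game

end MM

/-- the value of a finite concurrent reachability game equals the least
fixed point `m` of the operator `Δ`, and Player B has a uniformly optimal positional
strategy. -/
theorem stmt0
    {A B Q D : Type} [Fintype A] [Fintype B] [Fintype Q] [Fintype D]
    [Nonempty A] [Nonempty B] [Nonempty Q] [Nonempty D] [DecidableEq Q]
    (δ : Q → A → B → D) (dist : D → FDist Q) (T : Q)
    (habs : CRG.Absorbing δ dist T)
    (m : Q → ℝ) (hm : CRG.IsLfpDelta δ dist T m) :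
    (∀ q : Q, CRG.value δ dist T q = m q) ∧
      ∃ sB : Q → FDist B, ∀ (q : Q) (sA : CRG.Strat Q A),
        CRG.reach δ dist T sA (CRG.ofPos sB) q ≤ m q := by
  obtain ⟨hIcc, hfix, hlfp⟩ := hm
  have hmT : m T = 1 := by
    have h := congrFun hfix T
    simp only [CRG.Δop, if_pos rfl] at h
    exact h.symm
  have hmq : ∀ q, q ≠ T →
      m q = CRG.valGF (fun a b => CRG.lift dist m (δ q a b)) := by
    intro q hq
    have h := congrFun hfix q
    simp only [CRG.Δop, if_neg hq] at h
    exact h.symm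
  set sB : Q → FDist B := fun q =>
    Classical.choose (MM.minimax_B (CRG.locPay δ dist m q)) with hsB
  have hsBspec : ∀ (q : Q) (σA : FDist A),
      CRG.out (CRG.locPay δ dist m q) σA (sB q) ≤ CRG.valGF (CRG.locPay δ dist m q) :=
    fun q => Classical.choose_spec (MM.minimax_B (CRG.locPay δ dist m q))
  have hBle : ∀ (q : Q) (sA : CRG.Strat Q A),
      CRG.reach δ dist T sA (CRG.ofPos sB) q ≤ m q := by
    intro q sA
    refine ciSup_le fun n => ?_
    refine MM.Bside δ dist T m hmT (fun q' => (hIcc q').1) sB ?_ n sA [] q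
    intro q' hq' σA
    exact (hsBspec q' σA).trans (hmq q' hq').ge
  refine ⟨fun q => le_antisymm ?_ ?_, sB, hBle⟩
  · refine ciSup_le fun sA => ?_
    exact (ciInf_le (MM.bddBelow_reach δ dist T sA q) (CRG.ofPos sB)).trans (hBle q sA)
  · have hvst := hlfp (MM.vstar δ dist T) (MM.vstar_mem_Icc δ dist T)
      (MM.vstar_fixed δ dist T) q
    refine hvst.trans ?_
    refine ciSup_le fun n => ?_
    have h1 : CRG.vseq δ dist T n q ≤ CRG.valA δ dist T (MM.sAn δ dist T n) q := by
      refine le_ciInf fun sB' => ?_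
      have h2 := MM.Aside δ dist T n n [] q (by simp) sB'
      exact h2.trans (le_ciSup (MM.bddAbove_reachN δ dist T _ sB' q) n)
    exact h1.trans (le_ciSup (MM.bddAbove_valA δ dist T q) _)
end
end

section
/- In a finite concurrent reachability game ⟨C,⊤⟩ with value vector m, for every ε > 0 there exist a Player A strategy s_A and a natural number n such that for every state q and every Player B strategy s_B, the probability under (s_A, s_B) of reaching ⊤ from q within n steps is at least m(q) − ε; consequently val(s_A)(q) ≥ m(q) − ε for all q, and sup_{s_A} inf_{s_B} P^{s_A,s_B}_q(⊤) ≥ m(q). -/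
open scoped BigOperators Classical
set_option linter.unusedSectionVars false
set_option maxHeartbeats 1000000

noncomputable section

namespace CRG

variable {A B Q D : Type} [Fintype A] [Fintype B] [Fintype Q] [Fintype D]

instance instNonemptyFDist {X : Type} [Fintype X] [Nonempty X] : Nonempty (FDist X) :=
  ⟨⟨fun _ => (Fintype.card X : ℝ)⁻¹, by
    constructor
    · intro x; positivity
    · rw [Finset.sum_const, Finset.card_univ, nsmul_eq_mul]
      rw [mul_inv_cancel₀]
      exact_mod_cast Fintype.card_ne_zero⟩⟩

lemma weight_sum (σA : FDist A) (σB : FDist B) :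
    ∑ a, ∑ b, σA.1 a * σB.1 b = 1 := by
  rw [← Finset.sum_mul_sum, σA.2.2, σB.2.2, one_mul]

lemma weight_nonneg (σA : FDist A) (σB : FDist B) (a : A) (b : B) :
    0 ≤ σA.1 a * σB.1 b := mul_nonneg (σA.2.1 a) (σB.2.1 b)

lemma out_le_out_add (u u' : A → B → ℝ) (c : ℝ) (σA : FDist A) (σB : FDist B)
    (h : ∀ a b, u a b ≤ u' a b + c) :
    out u σA σB ≤ out u' σA σB + c := by
  have key : out u σA σB ≤ ∑ a, ∑ b, σA.1 a * σB.1 b * (u' a b + c) := by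
    refine Finset.sum_le_sum fun a _ => Finset.sum_le_sum fun b _ => ?_
    exact mul_le_mul_of_nonneg_left (h a b) (weight_nonneg σA σB a b)
  have expand : ∑ a, ∑ b, σA.1 a * σB.1 b * (u' a b + c)
      = out u' σA σB + c := by
    have : ∀ a b, σA.1 a * σB.1 b * (u' a b + c)
        = σA.1 a * σB.1 b * u' a b + σA.1 a * σB.1 b * c := fun a b => by ring
    simp only [this, Finset.sum_add_distrib]
    rw [out]
    congr 1
    simp only [← Finset.sum_mul]
    rw [weight_sum σA σB, one_mul]
  linarith [key, expand.le]

lemma le_out (u : A → B → ℝ) (lo : ℝ) (σA : FDist A) (σB : FDist B)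
    (h : ∀ a b, lo ≤ u a b) : lo ≤ out u σA σB := by
  have h0 : out (fun _ _ => lo) σA σB = lo := by
    rw [out]
    simp only [← Finset.sum_mul]
    rw [weight_sum σA σB, one_mul]
  have := out_le_out_add (fun _ _ => lo) u 0 σA σB (fun a b => by simpa using h a b)
  rw [h0] at this; linarith

lemma out_le (u : A → B → ℝ) (hi : ℝ) (σA : FDist A) (σB : FDist B)
    (h : ∀ a b, u a b ≤ hi) : out u σA σB ≤ hi := by
  have h0 : out (fun _ _ => hi) σA σB = hi := by
    rw [out]
    simp only [← Finset.sum_mul]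
    rw [weight_sum σA σB, one_mul]
  have := out_le_out_add u (fun _ _ => hi) 0 σA σB (fun a b => by simpa using h a b)
  rw [h0] at this; linarith

section Vals

variable [Nonempty A] [Nonempty B]

lemma exists_lb (u : A → B → ℝ) : ∃ lo : ℝ, ∀ a b, lo ≤ u a b := by
  obtain ⟨lo, hlo⟩ := Finite.exists_min (fun p : A × B => u p.1 p.2)
  exact ⟨u lo.1 lo.2, fun a b => hlo (a, b)⟩

lemma exists_ub (u : A → B → ℝ) : ∃ hi : ℝ, ∀ a b, u a b ≤ hi := by
  obtain ⟨hi, hhi⟩ := Finite.exists_max (fun p : A × B => u p.1 p.2)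
  exact ⟨u hi.1 hi.2, fun a b => hhi (a, b)⟩

lemma bddBelow_out (u : A → B → ℝ) (σA : FDist A) :
    BddBelow (Set.range fun σB : FDist B => out u σA σB) := by
  obtain ⟨lo, hlo⟩ := exists_lb u
  exact ⟨lo, by rintro x ⟨σB, rfl⟩; exact le_out u lo σA σB hlo⟩

lemma valStratGF_le_out (u : A → B → ℝ) (σA : FDist A) (σB : FDist B) :
    valStratGF u σA ≤ out u σA σB :=
  ciInf_le (bddBelow_out u σA) σB

lemma le_valStratGF (u : A → B → ℝ) (lo : ℝ) (σA : FDist A)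
    (h : ∀ a b, lo ≤ u a b) : lo ≤ valStratGF u σA :=
  le_ciInf fun σB => le_out u lo σA σB h

lemma valStratGF_le (u : A → B → ℝ) (hi : ℝ) (σA : FDist A)
    (h : ∀ a b, u a b ≤ hi) : valStratGF u σA ≤ hi := by
  obtain ⟨σB⟩ := (inferInstance : Nonempty (FDist B))
  exact le_trans (valStratGF_le_out u σA σB) (out_le u hi σA σB h)

lemma valStratGF_le_add (u u' : A → B → ℝ) (c : ℝ) (σA : FDist A)
    (h : ∀ a b, u a b ≤ u' a b + c) :
    valStratGF u σA ≤ valStratGF u' σA + c := by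
  have : valStratGF u σA - c ≤ valStratGF u' σA := by
    refine le_ciInf fun σB => ?_
    have h1 := valStratGF_le_out u σA σB
    have h2 := out_le_out_add u u' c σA σB h
    linarith
  linarith

lemma bddAbove_valStratGF (u : A → B → ℝ) :
    BddAbove (Set.range fun σA : FDist A => valStratGF u σA) := by
  obtain ⟨hi, hhi⟩ := exists_ub u
  exact ⟨hi, by rintro x ⟨σA, rfl⟩; exact valStratGF_le u hi σA hhi⟩

lemma valStratGF_le_valGF (u : A → B → ℝ) (σA : FDist A) :
    valStratGF u σA ≤ valGF u :=
  le_ciSup (bddAbove_valStratGF u) σA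

lemma le_valGF (u : A → B → ℝ) (lo : ℝ) (h : ∀ a b, lo ≤ u a b) :
    lo ≤ valGF u := by
  obtain ⟨σA⟩ := (inferInstance : Nonempty (FDist A))
  exact le_trans (le_valStratGF u lo σA h) (valStratGF_le_valGF u σA)

lemma valGF_le (u : A → B → ℝ) (hi : ℝ) (h : ∀ a b, u a b ≤ hi) :
    valGF u ≤ hi :=
  ciSup_le fun σA => valStratGF_le u hi σA h

lemma valGF_le_add (u u' : A → B → ℝ) (c : ℝ)
    (h : ∀ a b, u a b ≤ u' a b + c) :
    valGF u ≤ valGF u' + c :=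
  ciSup_le fun σA => le_trans (valStratGF_le_add u u' c σA h)
    (by linarith [valStratGF_le_valGF u' σA])

lemma exists_eps_opt (u : A → B → ℝ) (ε : ℝ) (hε : 0 < ε) :
    ∃ σA : FDist A, valGF u - ε < valStratGF u σA := by
  have : valGF u - ε < ⨆ σA : FDist A, valStratGF u σA := by
    rw [valGF] at *; linarith
  exact exists_lt_of_lt_ciSup this

end Vals

lemma lift_le_lift_add (dist : D → FDist Q) (v w : Q → ℝ) (c : ℝ)
    (h : ∀ q, v q ≤ w q + c) (d : D) :
    lift dist v d ≤ lift dist w d + c := by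
  have key : lift dist v d ≤ ∑ q, (dist d).1 q * (w q + c) :=
    Finset.sum_le_sum fun q _ => mul_le_mul_of_nonneg_left (h q) ((dist d).2.1 q)
  have expand : ∑ q, (dist d).1 q * (w q + c) = lift dist w d + c := by
    have : ∀ q, (dist d).1 q * (w q + c) = (dist d).1 q * w q + (dist d).1 q * c :=
      fun q => by ring
    simp only [this, Finset.sum_add_distrib, ← Finset.sum_mul, (dist d).2.2, one_mul]
    rfl
  linarith [key, expand.le]

lemma lift_nonneg (dist : D → FDist Q) (v : Q → ℝ) (h : ∀ q, 0 ≤ v q) (d : D) :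
    0 ≤ lift dist v d :=
  Finset.sum_nonneg fun q _ => mul_nonneg ((dist d).2.1 q) (h q)

lemma lift_le_one (dist : D → FDist Q) (v : Q → ℝ) (h : ∀ q, v q ≤ 1) (d : D) :
    lift dist v d ≤ 1 := by
  have key : lift dist v d ≤ lift dist (fun _ => 1) d + 0 :=
    lift_le_lift_add dist v (fun _ => 1) 0 (fun q => by simpa using h q) d
  have : lift dist (fun _ => 1) d = 1 := by
    rw [lift]; simp [(dist d).2.2]
  linarith

section Dop

variable [Nonempty A] [Nonempty B]

lemma Δop_le_add (δ : Q → A → B → D) (dist : D → FDist Q) (T : Q)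
    (v w : Q → ℝ) (c : ℝ) (hc : 0 ≤ c) (h : ∀ q, v q ≤ w q + c) (q : Q) :
    Δop δ dist T v q ≤ Δop δ dist T w q + c := by
  rw [Δop, Δop]
  split
  · linarith
  · exact valGF_le_add _ _ c fun a b => lift_le_lift_add dist v w c h (δ q a b)

lemma Δop_mem_Icc (δ : Q → A → B → D) (dist : D → FDist Q) (T : Q)
    (v : Q → ℝ) (h : ∀ q, v q ∈ Set.Icc (0:ℝ) 1) (q : Q) :
    Δop δ dist T v q ∈ Set.Icc (0:ℝ) 1 := by
  rw [Δop]
  split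
  · exact ⟨zero_le_one, le_refl 1⟩
  constructor
  · exact le_valGF _ 0 fun a b => lift_nonneg dist v (fun q' => (h q').1) _
  · exact valGF_le _ 1 fun a b => lift_le_one dist v (fun q' => (h q').2) _

lemma vseq_mem_Icc (δ : Q → A → B → D) (dist : D → FDist Q) (T : Q) (n : ℕ) (q : Q) :
    vseq δ dist T n q ∈ Set.Icc (0:ℝ) 1 := by
  induction n generalizing q with
  | zero => simp only [vseq]; split <;> norm_num
  | succ n ih => exact Δop_mem_Icc δ dist T _ (fun q' => ih q') q

lemma vseq_mono (δ : Q → A → B → D) (dist : D → FDist Q) (T : Q) :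
    Monotone (fun n q' => vseq δ dist T n q') := by
  refine monotone_nat_of_le_succ fun n => ?_
  induction n with
  | zero =>
      intro q
      simp only [vseq, Δop]
      split
      · norm_num
      · exact le_trans (by norm_num) (le_valGF _ 0 fun a b =>
          lift_nonneg dist _ (fun q' => (vseq_mem_Icc δ dist T 0 q').1) _)
  | succ n ih =>
      intro q
      show vseq δ dist T (n+1) q ≤ Δop δ dist T (vseq δ dist T (n+1)) q
      have := Δop_le_add δ dist T (vseq δ dist T n) (vseq δ dist T (n+1)) 0
        le_rfl (fun q' => by simpa using ih q') q
      exact le_of_le_of_eq this (add_zero _)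

lemma vseq_T (δ : Q → A → B → D) (dist : D → FDist Q) (T : Q) (n : ℕ) :
    vseq δ dist T n T = 1 := by
  cases n with
  | zero => simp [vseq]
  | succ n => simp [vseq, Δop]

/-- The pointwise limit of the iterates. -/
def vstar (δ : Q → A → B → D) (dist : D → FDist Q) (T : Q) (q : Q) : ℝ :=
  ⨆ n : ℕ, vseq δ dist T n q

lemma bddAbove_vseq (δ : Q → A → B → D) (dist : D → FDist Q) (T : Q) (q : Q) :
    BddAbove (Set.range fun n => vseq δ dist T n q) :=
  ⟨1, by rintro x ⟨n, rfl⟩; exact (vseq_mem_Icc δ dist T n q).2⟩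

lemma vseq_le_vstar (δ : Q → A → B → D) (dist : D → FDist Q) (T : Q) (n : ℕ) (q : Q) :
    vseq δ dist T n q ≤ vstar δ dist T q :=
  le_ciSup (bddAbove_vseq δ dist T q) n

lemma vstar_mem_Icc (δ : Q → A → B → D) (dist : D → FDist Q) (T : Q) (q : Q) :
    vstar δ dist T q ∈ Set.Icc (0:ℝ) 1 := by
  constructor
  · exact le_trans (vseq_mem_Icc δ dist T 0 q).1 (vseq_le_vstar δ dist T 0 q)
  · exact ciSup_le fun n => (vseq_mem_Icc δ dist T n q).2

lemma vstar_uniform (δ : Q → A → B → D) (dist : D → FDist Q) (T : Q)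
    (t : ℝ) (ht : 0 < t) :
    ∃ n : ℕ, ∀ q : Q, vstar δ dist T q ≤ vseq δ dist T n q + t := by
  have hq : ∀ q : Q, ∃ n : ℕ, vstar δ dist T q - t < vseq δ dist T n q := by
    intro q
    refine exists_lt_of_lt_ciSup ?_
    rw [← vstar]; linarith
  choose nf hnf using hq
  refine ⟨Finset.univ.sup nf, fun q => ?_⟩
  have h1 : vseq δ dist T (nf q) q ≤ vseq δ dist T (Finset.univ.sup nf) q :=
    vseq_mono δ dist T (Finset.le_sup (Finset.mem_univ q)) q
  linarith [hnf q]

lemma vstar_fixed (δ : Q → A → B → D) (dist : D → FDist Q) (T : Q) :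
    Δop δ dist T (vstar δ dist T) = vstar δ dist T := by
  funext q
  apply le_antisymm
  · refine le_of_forall_pos_le_add fun t ht => ?_
    obtain ⟨n, hn⟩ := vstar_uniform δ dist T t ht
    have h1 := Δop_le_add δ dist T (vstar δ dist T) (vseq δ dist T n) t ht.le hn q
    have h2 : Δop δ dist T (vseq δ dist T n) q = vseq δ dist T (n+1) q := rfl
    have h3 := vseq_le_vstar δ dist T (n+1) q
    linarith
  · refine ciSup_le fun n => ?_
    calc vseq δ dist T n q ≤ vseq δ dist T (n+1) q :=
          vseq_mono δ dist T (Nat.le_succ n) q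
      _ = Δop δ dist T (vseq δ dist T n) q := rfl
      _ ≤ Δop δ dist T (vstar δ dist T) q + 0 :=
          Δop_le_add δ dist T _ _ 0 le_rfl
            (fun q' => by simpa using vseq_le_vstar δ dist T n q') q
      _ = Δop δ dist T (vstar δ dist T) q := by ring

lemma m_le_vstar (δ : Q → A → B → D) (dist : D → FDist Q) (T : Q)
    (m : Q → ℝ) (hm : IsLfpDelta δ dist T m) (q : Q) :
    m q ≤ vstar δ dist T q :=
  hm.2.2 _ (vstar_mem_Icc δ dist T) (vstar_fixed δ dist T) q

end Dop

lemma step_nonneg (δ : Q → A → B → D) (dist : D → FDist Q) (σA : FDist A)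
    (σB : FDist B) (q q' : Q) : 0 ≤ step δ dist σA σB q q' :=
  Finset.sum_nonneg fun a _ => Finset.sum_nonneg fun b _ =>
    mul_nonneg (weight_nonneg σA σB a b) ((dist (δ q a b)).2.1 q')

lemma step_sum (δ : Q → A → B → D) (dist : D → FDist Q) (σA : FDist A)
    (σB : FDist B) (q : Q) : ∑ q', step δ dist σA σB q q' = 1 := by
  simp only [step]
  calc ∑ q', ∑ a, ∑ b, σA.1 a * σB.1 b * (dist (δ q a b)).1 q'
      = ∑ a, ∑ b, ∑ q', σA.1 a * σB.1 b * (dist (δ q a b)).1 q' := by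
        rw [Finset.sum_comm]
        exact Finset.sum_congr rfl fun a _ => Finset.sum_comm
    _ = ∑ a, ∑ b, σA.1 a * σB.1 b := by
        refine Finset.sum_congr rfl fun a _ => Finset.sum_congr rfl fun b _ => ?_
        rw [← Finset.mul_sum, (dist (δ q a b)).2.2, mul_one]
    _ = 1 := weight_sum σA σB

lemma step_out (δ : Q → A → B → D) (dist : D → FDist Q) (σA : FDist A)
    (σB : FDist B) (q : Q) (v : Q → ℝ) :
    ∑ q', step δ dist σA σB q q' * v q'
      = out (fun a b => lift dist v (δ q a b)) σA σB := by
  rw [out]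
  calc ∑ q', step δ dist σA σB q q' * v q'
      = ∑ q', ∑ a, ∑ b, σA.1 a * σB.1 b * (dist (δ q a b)).1 q' * v q' := by
        refine Finset.sum_congr rfl fun q' _ => ?_
        rw [step, Finset.sum_mul]
        exact Finset.sum_congr rfl fun a _ => by rw [Finset.sum_mul]
    _ = ∑ a, ∑ b, ∑ q', σA.1 a * σB.1 b * (dist (δ q a b)).1 q' * v q' := by
        rw [Finset.sum_comm]
        exact Finset.sum_congr rfl fun a _ => Finset.sum_comm
    _ = ∑ a, ∑ b, σA.1 a * σB.1 b * lift dist v (δ q a b) := by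
        refine Finset.sum_congr rfl fun a _ => Finset.sum_congr rfl fun b _ => ?_
        rw [lift, Finset.mul_sum]
        exact Finset.sum_congr rfl fun q' _ => by ring

lemma aux_nonneg (δ : Q → A → B → D) (dist : D → FDist Q) (S : Set Q) :
    ∀ (n : ℕ) (sA : Strat Q A) (sB : Strat Q B) (h : List Q) (q : Q),
      0 ≤ reachSetNAux δ dist S n sA sB h q := by
  intro n
  induction n with
  | zero =>
      intro sA sB h q
      simp only [reachSetNAux]
      split <;> norm_num
  | succ n ih =>
      intro sA sB h q
      simp only [reachSetNAux]
      split
      · norm_num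
      · exact Finset.sum_nonneg fun q' _ =>
          mul_nonneg (step_nonneg δ dist _ _ q q') (ih sA sB (h ++ [q]) q')

lemma aux_le_one (δ : Q → A → B → D) (dist : D → FDist Q) (S : Set Q) :
    ∀ (n : ℕ) (sA : Strat Q A) (sB : Strat Q B) (h : List Q) (q : Q),
      reachSetNAux δ dist S n sA sB h q ≤ 1 := by
  intro n
  induction n with
  | zero =>
      intro sA sB h q
      simp only [reachSetNAux]
      split <;> norm_num
  | succ n ih =>
      intro sA sB h q
      simp only [reachSetNAux]
      split
      · norm_num
      · calc ∑ q', step δ dist (sA h q) (sB h q) q q' *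
              reachSetNAux δ dist S n sA sB (h ++ [q]) q'
            ≤ ∑ q', step δ dist (sA h q) (sB h q) q q' * 1 :=
              Finset.sum_le_sum fun q' _ => mul_le_mul_of_nonneg_left
                (ih sA sB (h ++ [q]) q') (step_nonneg δ dist _ _ q q')
          _ = 1 := by simp [step_sum δ dist _ _ q]

lemma reachN_le_one (δ : Q → A → B → D) (dist : D → FDist Q) (T : Q) (n : ℕ)
    (sA : Strat Q A) (sB : Strat Q B) (q : Q) :
    reachN δ dist T n sA sB q ≤ 1 :=
  aux_le_one δ dist {T} n sA sB [] q

lemma reachN_le_reach (δ : Q → A → B → D) (dist : D → FDist Q) (T : Q) (n : ℕ)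
    (sA : Strat Q A) (sB : Strat Q B) (q : Q) :
    reachN δ dist T n sA sB q ≤ reach δ dist T sA sB q := by
  have hb : BddAbove (Set.range fun k : ℕ => reachN δ dist T k sA sB q) := by
    refine ⟨1, ?_⟩
    rintro x ⟨k, rfl⟩
    exact reachN_le_one δ dist T k sA sB q
  exact le_ciSup hb n

lemma reach_le_one (δ : Q → A → B → D) (dist : D → FDist Q) (T : Q)
    (sA : Strat Q A) (sB : Strat Q B) (q : Q) :
    reach δ dist T sA sB q ≤ 1 :=
  ciSup_le fun n => reachN_le_one δ dist T n sA sB q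

lemma valA_le_one [Nonempty B] (δ : Q → A → B → D) (dist : D → FDist Q) (T : Q)
    (sA : Strat Q A) (q : Q) : valA δ dist T sA q ≤ 1 := by
  have hsB : Nonempty (Strat Q B) := ⟨fun _ _ => Classical.arbitrary _⟩
  obtain ⟨sB⟩ := hsB
  refine le_trans (ciInf_le ?_ sB) (reach_le_one δ dist T sA sB q)
  refine ⟨0, ?_⟩
  rintro x ⟨sB', rfl⟩
  exact le_trans (aux_nonneg δ dist {T} 0 sA sB' [] q)
    (reachN_le_reach δ dist T 0 sA sB' q)

section Main

variable [Nonempty A] [Nonempty B] [Nonempty Q] [DecidableEq Q]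

lemma construction (δ : Q → A → B → D) (dist : D → FDist Q) (T : Q)
    (m : Q → ℝ) (hm : IsLfpDelta δ dist T m) (ε : ℝ) (hε : 0 < ε) :
    ∃ (sA : Strat Q A) (n : ℕ),
      (∀ (q : Q) (sB : Strat Q B), m q - ε ≤ reachN δ dist T n sA sB q) ∧
      (∀ q : Q, m q - ε ≤ valA δ dist T sA q) := by
  obtain ⟨n, hn⟩ := vstar_uniform δ dist T (ε/2) (by linarith)
  set ε' : ℝ := ε / (2 * (n+1)) with hε'def
  have hε'pos : 0 < ε' := by positivity
  have hch : ∀ (j : ℕ) (q : Q), ∃ σ : FDist A,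
      valGF (fun a b => lift dist (vseq δ dist T j) (δ q a b)) - ε'
        < valStratGF (fun a b => lift dist (vseq δ dist T j) (δ q a b)) σ :=
    fun j q => exists_eps_opt _ ε' hε'pos
  choose σ hσ using hch
  set sA : Strat Q A := fun h q => σ (n - 1 - h.length) q with hsAdef
  have key : ∀ (k : ℕ) (h : List Q) (q : Q) (sB : Strat Q B),
      k + h.length = n →
      vseq δ dist T k q - k * ε' ≤ reachSetNAux δ dist {T} k sA sB h q := by
    intro k
    induction k with
    | zero =>
        intro h q sB _
        simp only [reachSetNAux, vseq]
        by_cases hq : q = T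
        · simp [hq]
        · simp [hq, Set.mem_singleton_iff]
    | succ k ih =>
        intro h q sB hlen
        simp only [reachSetNAux]
        by_cases hq : q ∈ ({T} : Set Q)
        · rw [if_pos hq]
          have h1 := (vseq_mem_Icc δ dist T (k+1) q).2
          have h2 : (0:ℝ) ≤ (k+1 : ℕ) * ε' := by positivity
          linarith
        · rw [if_neg hq]
          have hqT : q ≠ T := by simpa [Set.mem_singleton_iff] using hq
          have hidx : n - 1 - h.length = k := by omega
          have hsAq : sA h q = σ k q := by rw [hsAdef]; simp [hidx]
          set u : A → B → ℝ := fun a b => lift dist (vseq δ dist T k) (δ q a b)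
            with hudef
          have hstep : ∀ q', vseq δ dist T k q' - k * ε'
              ≤ reachSetNAux δ dist {T} k sA sB (h ++ [q]) q' := by
            intro q'
            apply ih
            simp only [List.length_append, List.length_cons, List.length_nil]
            omega
          have c1 : vseq δ dist T (k+1) q = valGF u := by
            show Δop δ dist T (vseq δ dist T k) q = valGF u
            rw [Δop, if_neg hqT]
          have c2 : valGF u - ε' < valStratGF u (σ k q) := hσ k q
          have c3 : valStratGF u (σ k q) ≤ out u (σ k q) (sB h q) :=
            valStratGF_le_out u (σ k q) (sB h q)
          have c4 : out u (σ k q) (sB h q)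
              = ∑ q', step δ dist (σ k q) (sB h q) q q' * vseq δ dist T k q' :=
            (step_out δ dist (σ k q) (sB h q) q (vseq δ dist T k)).symm
          have c5 : ∑ q', step δ dist (σ k q) (sB h q) q q' * vseq δ dist T k q'
                - k * ε'
              ≤ ∑ q', step δ dist (σ k q) (sB h q) q q' *
                  reachSetNAux δ dist {T} k sA sB (h ++ [q]) q' := by
            have e1 : ∑ q', step δ dist (σ k q) (sB h q) q q' *
                  (vseq δ dist T k q' - k * ε')
                = ∑ q', step δ dist (σ k q) (sB h q) q q' * vseq δ dist T k q'
                  - k * ε' := by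
              have : ∀ q', step δ dist (σ k q) (sB h q) q q' *
                    (vseq δ dist T k q' - k * ε')
                  = step δ dist (σ k q) (sB h q) q q' * vseq δ dist T k q'
                    - step δ dist (σ k q) (sB h q) q q' * (k * ε') := fun q' => by
                ring
              rw [Finset.sum_congr rfl fun q' _ => this q', Finset.sum_sub_distrib,
                ← Finset.sum_mul, step_sum δ dist _ _ q, one_mul]
            have e2 : ∑ q', step δ dist (σ k q) (sB h q) q q' *
                  (vseq δ dist T k q' - k * ε')
                ≤ ∑ q', step δ dist (σ k q) (sB h q) q q' *
                  reachSetNAux δ dist {T} k sA sB (h ++ [q]) q' :=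
              Finset.sum_le_sum fun q' _ => mul_le_mul_of_nonneg_left (hstep q')
                (step_nonneg δ dist _ _ q q')
            linarith
          rw [hsAq]
          push_cast
          push_cast at c5
          linarith
  have hnε' : (n : ℝ) * ε' ≤ ε / 2 := by
    have h4 : ((n:ℝ) + 1) * ε' = ε / 2 := by
      rw [hε'def]
      field_simp
    nlinarith [hε'pos]
  have hreach : ∀ (q : Q) (sB : Strat Q B), m q - ε ≤ reachN δ dist T n sA sB q := by
    intro q sB
    have h1 := key n [] q sB (by simp)
    have h2 := m_le_vstar δ dist T m hm q
    have h3 := hn q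
    rw [reachN, reachSetN]
    linarith
  refine ⟨sA, n, hreach, fun q => ?_⟩
  have : Nonempty (Strat Q B) := ⟨fun _ _ => Classical.arbitrary _⟩
  refine le_ciInf fun sB => ?_
  exact le_trans (hreach q sB) (reachN_le_reach δ dist T n sA sB q)

end Main

end CRG

/-- for every ε > 0, Player A has a strategy reaching the target within
some number `n` of steps, with probability at least `m(q) - ε`, uniformly from every
state `q` and against every Player B strategy. -/
theorem stmt1
    {A B Q D : Type} [Fintype A] [Fintype B] [Fintype Q] [Fintype D]
    [Nonempty A] [Nonempty B] [Nonempty Q] [Nonempty D] [DecidableEq Q]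
    (δ : Q → A → B → D) (dist : D → FDist Q) (T : Q)
    (habs : CRG.Absorbing δ dist T)
    (m : Q → ℝ) (hm : CRG.IsLfpDelta δ dist T m) :
    ∀ ε : ℝ, 0 < ε →
      ∃ (sA : CRG.Strat Q A) (n : ℕ),
        (∀ (q : Q) (sB : CRG.Strat Q B), m q - ε ≤ CRG.reachN δ dist T n sA sB q) ∧
        (∀ q : Q, m q - ε ≤ CRG.valA δ dist T sA q) ∧
        (∀ q : Q, m q ≤ CRG.value δ dist T q) := by
  intro ε hε
  obtain ⟨sA, n, h1, h2⟩ := CRG.construction δ dist T m hm ε hε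
  refine ⟨sA, n, h1, h2, fun q => ?_⟩
  by_contra hcon
  push_neg at hcon
  set t := m q - CRG.value δ dist T q with ht
  have htpos : 0 < t := by linarith
  obtain ⟨sA', n', h1', h2'⟩ := CRG.construction δ dist T m hm (t/2) (by linarith)
  have h3 : CRG.valA δ dist T sA' q ≤ CRG.value δ dist T q := by
    have hb : BddAbove (Set.range fun s : CRG.Strat Q A => CRG.valA δ dist T s q) := by
      refine ⟨1, ?_⟩
      rintro x ⟨s, rfl⟩
      exact CRG.valA_le_one δ dist T s q
    exact le_ciSup hb sA'
  have h4 := h2' q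
  linarith
end
end
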